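/- Let U and V be nonempty closed convex subsets of X, let A = N_U and B = N_V be their normal cone operators, and let T_{(A,B)} = Id − P_U + P_V ∘ (2P_U − Id), where P_U and P_V are the metric projections onto U and V (the resolvents of N_U and N_V). Then ran(Id − T_{(A,B)}) ≃ (U − V) ∩ ((rec U)^⊖ + (rec V)^⊖). -/

import Mathlib

open Set Pointwise

set_option linter.unusedSectionVars false
set_option maxHeartbeats 1000000

/-- Domain of a set-valued operator. -/
def svDom {X : Type*} (A : X → Set X) : Set X := {x | (A x).Nonempty}

/-- Range of a set-valued operator. -/
def svRan {X : Type*} (A : X → Set X) : Set X := ⋃ x, A x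

/-- Monotonicity of a set-valued operator. -/
def IsMonotoneOp {X : Type*} [NormedAddCommGroup X] [InnerProductSpace ℝ X]
    (A : X → Set X) : Prop :=
  ∀ ⦃x u y v : X⦄, u ∈ A x → v ∈ A y → 0 ≤ (inner ℝ (x - y) (u - v) : ℝ)

/-- Maximal monotonicity of a set-valued operator. -/
def IsMaxMonotoneOp {X : Type*} [NormedAddCommGroup X] [InnerProductSpace ℝ X]
    (A : X → Set X) : Prop :=
  IsMonotoneOp A ∧
    ∀ x u : X, (∀ y v : X, v ∈ A y → 0 ≤ (inner ℝ (x - y) (u - v) : ℝ)) → u ∈ A x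

/-- `A` is 3* monotone (rectangular): for every `x ∈ dom A` and `v ∈ ran A`, the set
`{⟪x - z, v - w⟫ : (z,w) ∈ gra A}` is bounded below. -/
def Is3StarMonotoneOp {X : Type*} [NormedAddCommGroup X] [InnerProductSpace ℝ X]
    (A : X → Set X) : Prop :=
  ∀ x ∈ svDom A, ∀ v ∈ svRan A,
    BddBelow {r : ℝ | ∃ z w : X, w ∈ A z ∧ r = (inner ℝ (x - z) (v - w) : ℝ)}

/-- Two sets are nearly equal if they have the same closure and the same relative
(intrinsic) interior. -/
def NearEq {X : Type*} [NormedAddCommGroup X] [NormedSpace ℝ X] (C D : Set X) : Prop :=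
  closure C = closure D ∧ intrinsicInterior ℝ C = intrinsicInterior ℝ D

/-- `J` is the resolvent of `A`: the single-valued, everywhere-defined map with
`x - J x ∈ A (J x)` for all `x`. -/
def IsResolventOf {X : Type*} [NormedAddCommGroup X] (J : X → X) (A : X → Set X) : Prop :=
  ∀ x : X, x - J x ∈ A (J x)

/-- The Douglas–Rachford operator `T = Id - J_A + J_B ∘ (2 J_A - Id)` built from
the resolvents `J_A` and `J_B`. -/
noncomputable def drT {X : Type*} [NormedAddCommGroup X] [NormedSpace ℝ X]
    (JA JB : X → X) : X → X :=
  fun x => x - JA x + JB ((2 : ℝ) • JA x - x)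

/-- The normal cone operator of a set `U`: `N_U(x) = {u : ∀ y ∈ U, ⟪u, y - x⟫ ≤ 0}`
if `x ∈ U`, and `∅` otherwise. -/
def normalConeOp {X : Type*} [NormedAddCommGroup X] [InnerProductSpace ℝ X]
    (U : Set X) (x : X) : Set X :=
  {u : X | x ∈ U ∧ ∀ y ∈ U, (inner ℝ u (y - x) : ℝ) ≤ 0}

/-- The recession cone `rec C = {x : x + C ⊆ C}`. -/
def recCone {X : Type*} [AddCommGroup X] (C : Set X) : Set X :=
  {x : X | ∀ c ∈ C, x + c ∈ C}

/-- The polar cone `K^⊖ = {u : ∀ k ∈ K, ⟪k, u⟫ ≤ 0}`. -/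
def polarCone {X : Type*} [NormedAddCommGroup X] [InnerProductSpace ℝ X]
    (K : Set X) : Set X :=
  {u : X | ∀ k ∈ K, (inner ℝ k u : ℝ) ≤ 0}

/-- `P` is the metric projection onto `U`. -/
def IsMetricProjection {X : Type*} [NormedAddCommGroup X] (P : X → X) (U : Set X) : Prop :=
  ∀ x : X, P x ∈ U ∧ ∀ y ∈ U, ‖x - P x‖ ≤ ‖x - y‖


section RI

variable {X : Type*} [NormedAddCommGroup X] [NormedSpace ℝ X] [FiniteDimensional ℝ X]

theorem mem_ri_iff {S : Set X} {w : X} :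
    w ∈ intrinsicInterior ℝ S ↔
      w ∈ affineSpan ℝ S ∧ ∃ ε > 0, ∀ z, z ∈ affineSpan ℝ S → dist z w < ε → z ∈ S := by
  constructor
  · rintro ⟨y, hy, rfl⟩
    refine ⟨y.2, ?_⟩
    rw [mem_interior_iff_mem_nhds, Metric.mem_nhds_iff] at hy
    obtain ⟨ε, hε, hball⟩ := hy
    refine ⟨ε, hε, fun z hz hdist => ?_⟩
    have : (⟨z, hz⟩ : affineSpan ℝ S) ∈ Metric.ball y ε := by
      simp only [Metric.mem_ball, Subtype.dist_eq]
      exact hdist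
    exact hball this
  · rintro ⟨hw, ε, hε, h⟩
    refine ⟨⟨w, hw⟩, ?_, rfl⟩
    rw [mem_interior_iff_mem_nhds, Metric.mem_nhds_iff]
    refine ⟨ε, hε, fun z hz => ?_⟩
    simp only [Metric.mem_ball, Subtype.dist_eq] at hz
    exact h z z.2 hz

theorem ri_open {S : Set X} {w : X} (hw : w ∈ intrinsicInterior ℝ S) :
    ∃ ε > 0, ∀ z, z ∈ affineSpan ℝ S → dist z w < ε → z ∈ intrinsicInterior ℝ S := by
  obtain ⟨y, hy, rfl⟩ := hw
  rw [mem_interior_iff_mem_nhds, Metric.mem_nhds_iff] at hy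
  obtain ⟨ε, hε, hball⟩ := hy
  refine ⟨ε, hε, fun z hz hdist => ?_⟩
  refine ⟨⟨z, hz⟩, ?_, rfl⟩
  have hb : Metric.ball (⟨z, hz⟩ : affineSpan ℝ S) (ε - dist z ↑y) ⊆ ((↑) ⁻¹' S) := by
    intro u hu
    apply hball
    simp only [Metric.mem_ball, Subtype.dist_eq] at hu ⊢
    calc dist (u : X) ↑y ≤ dist (u : X) z + dist z ↑y := dist_triangle _ _ _
      _ < (ε - dist z ↑y) + dist z ↑y := by linarith
      _ = ε := by ring
  exact interior_maximal hb Metric.isOpen_ball (by simp [Metric.mem_ball]; linarith)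

/-- membership of affine span is stable under adding multiples of differences -/
theorem span_combo {S : Set X} {a b c : X} (ha : a ∈ affineSpan ℝ S)
    (hb : b ∈ affineSpan ℝ S) (hc : c ∈ affineSpan ℝ S) (t : ℝ) :
    t • (a - b) + c ∈ affineSpan ℝ S := by
  have := AffineSubspace.smul_vsub_vadd_mem (affineSpan ℝ S) t ha hb hc
  simpa [vsub_eq_sub, vadd_eq_add] using this

theorem closure_subset_affineSpan {S : Set X} : closure S ⊆ (affineSpan ℝ S : Set X) := by
  have h1 : IsClosed ((affineSpan ℝ S : Set X)) := (affineSpan ℝ S).closed_of_finiteDimensional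
  exact closure_minimal (subset_affineSpan ℝ S) h1

theorem affineSpan_closure_eq {S : Set X} : affineSpan ℝ (closure S) = affineSpan ℝ S := by
  refine le_antisymm ?_ (affineSpan_mono ℝ subset_closure)
  rw [affineSpan_le]
  exact closure_subset_affineSpan

/-- line segment principle -/
theorem openSegment_ri_closure {S : Set X} (hS : Convex ℝ S) {y z : X}
    (hy : y ∈ intrinsicInterior ℝ S) (hz : z ∈ closure S) :
    openSegment ℝ y z ⊆ intrinsicInterior ℝ S := by
  rw [mem_ri_iff] at hy
  obtain ⟨hysp, ε, hε, hball⟩ := hy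
  rintro w ⟨a, b, ha, hb, hab, rfl⟩
  have hzsp : z ∈ affineSpan ℝ S := closure_subset_affineSpan hz
  have hwsp : a • y + b • z ∈ affineSpan ℝ S := by
    have := span_combo hysp hzsp hzsp a
    have h2 : a • (y - z) + z = a • y + b • z := by
      rw [smul_sub]; rw [show b = 1 - a by linarith]; module
    rwa [h2] at this
  rw [mem_ri_iff]
  refine ⟨hwsp, a * ε / 4, by positivity, fun u husp hdist => ?_⟩
  -- pick z' ∈ S close to z
  have hz' : ∃ z' ∈ S, dist z' z < a * ε / (4 * b) := by
    rw [Metric.mem_closure_iff] at hz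
    obtain ⟨z', hz'S, hd⟩ := hz (a * ε / (4 * b)) (by positivity)
    exact ⟨z', hz'S, by rwa [dist_comm]⟩
  obtain ⟨z', hz'S, hdz'⟩ := hz'
  set h := u - (a • y + b • z) with hh
  set y' := y + (a⁻¹ • (h + b • (z - z'))) with hy'def
  have hy'sp : y' ∈ affineSpan ℝ S := by
    have s1 : a⁻¹ • (u - (a • y + b • z)) + y ∈ affineSpan ℝ S := span_combo husp hwsp hysp a⁻¹
    have s2 : (a⁻¹ * b) • (z - z') + (a⁻¹ • (u - (a • y + b • z)) + y) ∈ affineSpan ℝ S :=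
      span_combo hzsp (subset_affineSpan ℝ S hz'S) s1 (a⁻¹ * b)
    have : y' = (a⁻¹ * b) • (z - z') + (a⁻¹ • (u - (a • y + b • z)) + y) := by
      rw [hy'def, hh]; module
    rwa [this]
  have hy'close : dist y' y < ε := by
    rw [hy'def]
    rw [dist_eq_norm]
    have : y + a⁻¹ • (h + b • (z - z')) - y = a⁻¹ • (h + b • (z - z')) := by abel
    rw [this, norm_smul]
    have hnh : ‖h‖ < a * ε / 4 := by
      rw [hh, ← dist_eq_norm]; exact hdist
    have hnz : ‖b • (z - z')‖ < b * (a * ε / (4 * b)) := by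
      rw [norm_smul, Real.norm_eq_abs, abs_of_pos hb]
      have : ‖z - z'‖ < a * ε / (4 * b) := by rw [dist_comm] at hdz'; rw [← dist_eq_norm]; exact hdz'
      nlinarith
    have hb' : b * (a * ε / (4 * b)) = a * ε / 4 := by field_simp
    have : ‖h + b • (z - z')‖ < a * ε / 2 := by
      calc ‖h + b • (z - z')‖ ≤ ‖h‖ + ‖b • (z - z')‖ := norm_add_le _ _
        _ < a * ε / 4 + a * ε / 4 := by rw [hb'] at hnz; linarith
        _ = a * ε / 2 := by ring
    rw [Real.norm_eq_abs, abs_of_pos (inv_pos.2 ha)]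
    calc a⁻¹ * ‖h + b • (z - z')‖ < a⁻¹ * (a * ε / 2) := by
          exact mul_lt_mul_of_pos_left this (inv_pos.2 ha)
      _ = ε / 2 := by field_simp
      _ < ε := by linarith
  have hy'S : y' ∈ S := hball y' hy'sp hy'close
  have : u = a • y' + b • z' := by
    rw [hy'def, hh, smul_add, smul_smul, mul_inv_cancel₀ (ne_of_gt ha), one_smul]
    module
  rw [this]
  exact hS hy'S hz'S (le_of_lt ha) (le_of_lt hb) hab

end RI

section RI2

variable {X : Type*} [NormedAddCommGroup X] [NormedSpace ℝ X] [FiniteDimensional ℝ X]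

/-- prolongation lemma -/
theorem ri_prolong {S : Set X} {w z : X} (hw : w ∈ intrinsicInterior ℝ S)
    (hz : z ∈ affineSpan ℝ S) : ∃ t : ℝ, 0 < t ∧ w + t • (w - z) ∈ S := by
  rw [mem_ri_iff] at hw
  obtain ⟨hwsp, ε, hε, hball⟩ := hw
  by_cases hwz : w = z
  · exact ⟨1, one_pos, by
      rw [hwz, sub_self, smul_zero, add_zero]
      exact hball z hz (by rw [hwz]; simpa using hε)⟩
  have hn : 0 < ‖w - z‖ := by
    rw [norm_pos_iff, sub_ne_zero]; exact hwz
  set t := ε / (2 * ‖w - z‖) with ht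
  refine ⟨t, by positivity, ?_⟩
  have hsp : w + t • (w - z) ∈ affineSpan ℝ S := by
    have := span_combo hwsp hz hwsp t
    rwa [add_comm] at this
  refine hball _ hsp ?_
  rw [dist_eq_norm]
  have : w + t • (w - z) - w = t • (w - z) := by abel
  rw [this, norm_smul, Real.norm_eq_abs, abs_of_pos (by positivity : (0:ℝ) < t), ht]
  rw [div_mul_eq_mul_div, mul_comm]
  rw [div_lt_iff₀ (by positivity : (0:ℝ) < 2 * ‖w - z‖)]
  nlinarith

/-- closure of relative interior equals closure, for convex sets -/
theorem closure_ri_eq {S : Set X} (hS : Convex ℝ S) :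
    closure (intrinsicInterior ℝ S) = closure S := by
  rcases S.eq_empty_or_nonempty with rfl | hSne
  · simp
  refine le_antisymm (closure_mono intrinsicInterior_subset) ?_
  obtain ⟨y, hy⟩ := hSne.intrinsicInterior hS
  intro z hz
  rw [Metric.mem_closure_iff]
  intro ε hε
  by_cases hyz : y = z
  · refine ⟨y, hy, ?_⟩
    rw [hyz]
    simpa using hε
  set t := min (1/2 : ℝ) (ε / (2 * (‖y - z‖ + 1))) with htdef
  have ht0 : 0 < t := by
    apply lt_min (by norm_num)
    positivity
  have ht1 : t < 1 := lt_of_le_of_lt (min_le_left _ _) (by norm_num)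
  set w := t • y + (1 - t) • z with hwdef
  have hwseg : w ∈ openSegment ℝ y z := ⟨t, 1 - t, ht0, by linarith, by ring, rfl⟩
  have hwri : w ∈ intrinsicInterior ℝ S := openSegment_ri_closure hS hy hz hwseg
  refine ⟨w, hwri, ?_⟩
  rw [dist_comm, dist_eq_norm]
  have : w - z = t • (y - z) := by rw [hwdef]; module
  rw [this, norm_smul, Real.norm_eq_abs, abs_of_pos ht0]
  have h2 : t ≤ ε / (2 * (‖y - z‖ + 1)) := min_le_right _ _
  have h3 : ‖y - z‖ + 1 > 0 := by positivity
  calc t * ‖y - z‖ ≤ (ε / (2 * (‖y - z‖ + 1))) * ‖y - z‖ := by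
        apply mul_le_mul_of_nonneg_right h2 (norm_nonneg _)
    _ < ε := by
        rw [div_mul_eq_mul_div, div_lt_iff₀ (by positivity)]
        nlinarith [norm_nonneg (y - z)]

/-- relative interior of closure equals relative interior, for convex sets -/
theorem ri_closure_eq {S : Set X} (hS : Convex ℝ S) :
    intrinsicInterior ℝ (closure S) = intrinsicInterior ℝ S := by
  rcases S.eq_empty_or_nonempty with rfl | hSne
  · simp
  have hsp : affineSpan ℝ (closure S) = affineSpan ℝ S := affineSpan_closure_eq
  refine le_antisymm ?_ ?_
  · intro w hw
    obtain ⟨y, hy⟩ := hSne.intrinsicInterior hS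
    have hysp : y ∈ affineSpan ℝ (closure S) := by
      rw [hsp]; exact subset_affineSpan ℝ S (intrinsicInterior_subset hy)
    obtain ⟨t, ht, hmem⟩ := ri_prolong hw hysp
    have h1t : (1 : ℝ) + t ≠ 0 := by positivity
    have hwseg : w ∈ openSegment ℝ y (w + t • (w - y)) := by
      refine ⟨t / (1 + t), 1 / (1 + t), by positivity, by positivity, ?_, ?_⟩
      · rw [← add_div, add_comm, div_self h1t]
      · match_scalars <;> field_simp <;> ring
    exact openSegment_ri_closure hS hy (by exact hmem) hwseg
  · intro w hw
    rw [mem_ri_iff] at hw ⊢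
    obtain ⟨hwsp, ε, hε, hball⟩ := hw
    rw [hsp]
    exact ⟨hwsp, ε, hε, fun z hz hd => subset_closure (hball z hz hd)⟩

/-- intrinsic interior of a convex set is convex -/
theorem ri_convex {S : Set X} (hS : Convex ℝ S) : Convex ℝ (intrinsicInterior ℝ S) := by
  rw [convex_iff_openSegment_subset]
  intro x hx y hy
  exact openSegment_ri_closure hS hx (subset_closure (intrinsicInterior_subset hy))

/-- same closure implies same relative interior, for convex sets -/
theorem ri_eq_of_closure_eq {S T : Set X} (hS : Convex ℝ S) (hT : Convex ℝ T)
    (h : closure S = closure T) : intrinsicInterior ℝ S = intrinsicInterior ℝ T := by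
  rw [← ri_closure_eq hS, ← ri_closure_eq hT, h]

theorem ri_mono_span {C E : Set X} (h1 : C ⊆ E) (h2 : affineSpan ℝ E ≤ affineSpan ℝ C) :
    intrinsicInterior ℝ C ⊆ intrinsicInterior ℝ E := by
  intro w hw
  rw [mem_ri_iff] at hw ⊢
  obtain ⟨hwsp, ε, hε, hball⟩ := hw
  exact ⟨subset_affineSpan ℝ E (h1 (hball w hwsp (by simp [hε]))),
    ε, hε, fun z hz hd => h1 (hball z (h2 hz) hd)⟩

theorem ri_sandwich {C E : Set X} (hEC : intrinsicInterior ℝ E ⊆ C) (hCE : C ⊆ E) :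
    intrinsicInterior ℝ E ⊆ intrinsicInterior ℝ C := by
  intro w hw
  have hwC : w ∈ C := hEC hw
  obtain ⟨ε, hε, hball⟩ := ri_open hw
  rw [mem_ri_iff]
  exact ⟨subset_affineSpan ℝ C hwC, ε, hε,
    fun z hz hd => hEC (hball z (affineSpan_mono ℝ hCE hz) hd)⟩

end RI2

section RI3

variable {X : Type*} [NormedAddCommGroup X] [NormedSpace ℝ X] [FiniteDimensional ℝ X]

/-- relative interior of a sum is contained in the sum of relative interiors -/
theorem ri_add_subset {A B : Set X} (hA : Convex ℝ A) (hB : Convex ℝ B)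
    (hAne : A.Nonempty) (hBne : B.Nonempty) :
    intrinsicInterior ℝ (A + B) ⊆ intrinsicInterior ℝ A + intrinsicInterior ℝ B := by
  intro w hw
  obtain ⟨a₀, ha₀⟩ := hAne.intrinsicInterior hA
  obtain ⟨b₀, hb₀⟩ := hBne.intrinsicInterior hB
  have hy : a₀ + b₀ ∈ affineSpan ℝ (A + B) :=
    subset_affineSpan ℝ _ (Set.add_mem_add (intrinsicInterior_subset ha₀)
      (intrinsicInterior_subset hb₀))
  obtain ⟨t, ht, hz⟩ := ri_prolong hw hy
  obtain ⟨a₁, ha₁, b₁, hb₁, hab⟩ := hz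
  have h1t : (1 : ℝ) + t ≠ 0 := by positivity
  set p := (t / (1 + t) : ℝ) with hp
  set q := (1 / (1 + t) : ℝ) with hq
  have hpq : p + q = 1 := by rw [hp, hq, ← add_div, add_comm, div_self h1t]
  have hp0 : 0 < p := by positivity
  have hq0 : 0 < q := by positivity
  have haseg : p • a₀ + q • a₁ ∈ intrinsicInterior ℝ A :=
    openSegment_ri_closure hA ha₀ (subset_closure ha₁) ⟨p, q, hp0, hq0, hpq, rfl⟩
  have hbseg : p • b₀ + q • b₁ ∈ intrinsicInterior ℝ B :=
    openSegment_ri_closure hB hb₀ (subset_closure hb₁) ⟨p, q, hp0, hq0, hpq, rfl⟩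
  refine ⟨p • a₀ + q • a₁, haseg, p • b₀ + q • b₁, hbseg, ?_⟩
  have : a₁ + b₁ = w + t • (w - (a₀ + b₀)) := hab
  show (p • a₀ + q • a₁) + (p • b₀ + q • b₁) = w
  have hw' : (p • a₀ + q • a₁) + (p • b₀ + q • b₁) = q • (a₁ + b₁) + p • (a₀ + b₀) := by module
  rw [hw', this]
  rw [hp, hq]
  match_scalars <;> field_simp <;> ring

/-- relative interior of an intersection -/
theorem ri_inter_subset {A B : Set X} (hA : Convex ℝ A) (hB : Convex ℝ B)
    {q₀ : X} (hq₀A : q₀ ∈ intrinsicInterior ℝ A) (hq₀B : q₀ ∈ intrinsicInterior ℝ B) :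
    intrinsicInterior ℝ (A ∩ B) ⊆ intrinsicInterior ℝ A ∩ intrinsicInterior ℝ B := by
  set P := intrinsicInterior ℝ A ∩ intrinsicInterior ℝ B with hP
  have hPconv : Convex ℝ P := (ri_convex hA).inter (ri_convex hB)
  have hPQ : P ⊆ A ∩ B := Set.inter_subset_inter intrinsicInterior_subset intrinsicInterior_subset
  have hclose : closure (A ∩ B) ⊆ closure P := by
    intro z hz
    have hzA : z ∈ closure A := closure_mono Set.inter_subset_left hz
    have hzB : z ∈ closure B := closure_mono Set.inter_subset_right hz
    rw [Metric.mem_closure_iff]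
    intro ε hε
    by_cases hqz : q₀ = z
    · exact ⟨q₀, ⟨hq₀A, hq₀B⟩, by rw [hqz]; simpa using hε⟩
    set t := min (1/2 : ℝ) (ε / (2 * (‖q₀ - z‖ + 1))) with htdef
    have ht0 : 0 < t := lt_min (by norm_num) (by positivity)
    have ht1 : t < 1 := lt_of_le_of_lt (min_le_left _ _) (by norm_num)
    set w := t • q₀ + (1 - t) • z with hwdef
    have hwseg : w ∈ openSegment ℝ q₀ z := ⟨t, 1 - t, ht0, by linarith, by ring, rfl⟩
    have hwP : w ∈ P :=
      ⟨openSegment_ri_closure hA hq₀A hzA hwseg, openSegment_ri_closure hB hq₀B hzB hwseg⟩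
    refine ⟨w, hwP, ?_⟩
    rw [dist_comm, dist_eq_norm]
    have : w - z = t • (q₀ - z) := by rw [hwdef]; module
    rw [this, norm_smul, Real.norm_eq_abs, abs_of_pos ht0]
    have h2 : t ≤ ε / (2 * (‖q₀ - z‖ + 1)) := min_le_right _ _
    calc t * ‖q₀ - z‖ ≤ (ε / (2 * (‖q₀ - z‖ + 1))) * ‖q₀ - z‖ :=
          mul_le_mul_of_nonneg_right h2 (norm_nonneg _)
      _ < ε := by
          rw [div_mul_eq_mul_div, div_lt_iff₀ (by positivity)]
          nlinarith [norm_nonneg (q₀ - z)]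
  have hcl : closure (A ∩ B) = closure P :=
    le_antisymm hclose (closure_mono hPQ)
  have : intrinsicInterior ℝ (A ∩ B) = intrinsicInterior ℝ P :=
    ri_eq_of_closure_eq (hA.inter hB) hPconv hcl
  rw [this]
  exact intrinsicInterior_subset

/-- when the affine span is everything, ri = interior -/
theorem ri_eq_interior_of_span_top {S : Set X} (h : affineSpan ℝ S = ⊤) :
    intrinsicInterior ℝ S = interior S := by
  ext w
  rw [mem_ri_iff, mem_interior_iff_mem_nhds, Metric.mem_nhds_iff]
  constructor
  · rintro ⟨-, ε, hε, hball⟩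
    exact ⟨ε, hε, fun z hz => hball z (by rw [h]; trivial) (by simpa [Metric.mem_ball] using hz)⟩
  · rintro ⟨ε, hε, hball⟩
    exact ⟨by rw [h]; trivial, ε, hε, fun z _ hd => hball (by simpa [Metric.mem_ball] using hd)⟩

end RI3


noncomputable section Cones

open scoped RealInnerProductSpace

variable {X : Type*} [NormedAddCommGroup X] [InnerProductSpace ℝ X] [FiniteDimensional ℝ X]

theorem polarCone_zero_mem (K : Set X) : (0 : X) ∈ polarCone K :=
  fun k _ => by simp

theorem polarCone_isClosed (K : Set X) : IsClosed (polarCone K) := by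
  have : polarCone K = ⋂ k ∈ K, {u : X | ⟪k, u⟫ ≤ 0} := by
    ext u; simp [polarCone, Set.mem_iInter]
  rw [this]
  exact isClosed_biInter fun k _ =>
    isClosed_le (Continuous.inner continuous_const continuous_id) continuous_const

theorem polarCone_convex (K : Set X) : Convex ℝ (polarCone K) := by
  intro x hx y hy a b ha hb hab k hk
  have h1 := hx k hk
  have h2 := hy k hk
  show ⟪k, a • x + b • y⟫ ≤ 0
  rw [inner_add_right, real_inner_smul_right, real_inner_smul_right]
  nlinarith

theorem recCone_zero_mem (C : Set X) : (0 : X) ∈ recCone C := fun c hc => by simpa using hc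

theorem recCone_add_mem {C : Set X} {x y : X} (hx : x ∈ recCone C) (hy : y ∈ recCone C) :
    x + y ∈ recCone C := fun c hc => by
  have := hx (y + c) (hy c hc); rwa [← add_assoc] at this

theorem recCone_isClosed {C : Set X} (hC : IsClosed C) : IsClosed (recCone C) := by
  have : recCone C = ⋂ c ∈ C, (fun x : X => x + c) ⁻¹' C := by
    ext x; simp [recCone, Set.mem_iInter]
  rw [this]
  exact isClosed_biInter fun c _ => hC.preimage (continuous_id.add continuous_const)

theorem recCone_convex {C : Set X} (hC : Convex ℝ C) : Convex ℝ (recCone C) := by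
  intro x hx y hy a b ha hb hab c hc
  have h1 := hx c hc
  have h2 := hy c hc
  have hb' : b = 1 - a := by linarith
  subst hb'
  have key : a • x + (1 - a) • y + c = a • (x + c) + (1 - a) • (y + c) := by module
  show a • x + (1 - a) • y + c ∈ C
  rw [key]
  exact hC h1 h2 ha hb hab

theorem recCone_nsmul {C : Set X} {φ : X} (hφ : φ ∈ recCone C) {v : X} (hv : v ∈ C) (n : ℕ) :
    v + (n : ℝ) • φ ∈ C := by
  induction n with
  | zero => simpa using hv
  | succ n ih =>
    have := hφ _ ih
    have he : φ + (v + (n : ℝ) • φ) = v + (((n : ℕ) + 1 : ℕ) : ℝ) • φ := by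
      push_cast
      rw [add_smul, one_smul]; abel
    rw [he] at this
    exact this

/-- projection onto a nonempty closed convex set: variational inequality -/
theorem exists_proj {S : Set X} (hne : S.Nonempty) (hcl : IsClosed S) (hconv : Convex ℝ S)
    (x : X) : ∃ p ∈ S, ∀ y ∈ S, ⟪x - p, y - p⟫ ≤ 0 := by
  obtain ⟨p, hp, heq⟩ := exists_norm_eq_iInf_of_complete_convex hne (hcl.isComplete) hconv x
  exact ⟨p, hp, (norm_eq_iInf_iff_real_inner_le_zero hconv hp).1 heq⟩

/-- the bipolar theorem for closed convex cones -/
theorem bipolar {R : Set X} (hcl : IsClosed R) (hconv : Convex ℝ R) (h0 : (0:X) ∈ R)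
    (hadd : ∀ x y, x ∈ R → y ∈ R → x + y ∈ R) :
    polarCone (polarCone R) = R := by
  apply le_antisymm
  · intro x hx
    by_contra hxR
    obtain ⟨p, hp, hproj⟩ := exists_proj ⟨0, h0⟩ hcl hconv x
    set φ := x - p with hφdef
    have hφne : φ ≠ 0 := by
      rw [hφdef, sub_ne_zero]; rintro rfl; exact hxR hp
    have h1 : ⟪φ, -p⟫ ≤ 0 := by
      have := hproj 0 h0; rwa [zero_sub] at this
    have h2 : ⟪φ, p⟫ ≤ 0 := by
      have := hproj (p + p) (hadd p p hp hp); rwa [add_sub_cancel_right] at this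
    have hφp : ⟪φ, p⟫ = 0 := by
      rw [inner_neg_right] at h1; linarith
    have hφpolar : φ ∈ polarCone R := by
      intro y hy
      have := hproj y hy
      rw [inner_sub_right, hφp] at this
      show ⟪y, φ⟫ ≤ 0
      rw [real_inner_comm]
      linarith
    have hle := hx φ hφpolar
    have hxpp : x = φ + p := by rw [hφdef]; abel
    rw [hxpp, inner_add_right, hφp, add_zero] at hle
    have hpos : (0:ℝ) < ⟪φ, φ⟫ := by
      have := real_inner_self_nonneg (x := φ)
      rcases lt_or_eq_of_le this with h | h
      · exact h
      · exact absurd (inner_self_eq_zero.1 h.symm) hφne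
    linarith
  · intro r hr k hk
    have := hk r hr
    show ⟪k, r⟫ ≤ 0
    rw [real_inner_comm]
    exact this

/-- horizon lemma: normalized limits of unbounded sequences in a closed convex set
are recession directions -/
theorem horizon {C : Set X} (hcl : IsClosed C) (hconv : Convex ℝ C)
    {u : ℕ → X} (hu : ∀ n, u n ∈ C) (hnorm : Filter.Tendsto (fun n => ‖u n‖) Filter.atTop Filter.atTop)
    {e : X} (he : Filter.Tendsto (fun n => ‖u n‖⁻¹ • u n) Filter.atTop (nhds e)) :
    e ∈ recCone C := by
  intro c hc
  have hball : ∀ᶠ n in Filter.atTop, (1 : ℝ) ≤ ‖u n‖ := hnorm.eventually_ge_atTop 1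
  have hmem : ∀ᶠ n in Filter.atTop, c + ‖u n‖⁻¹ • (u n - c) ∈ C := by
    filter_upwards [hball] with n hn
    have h0 : (0:ℝ) < ‖u n‖ := lt_of_lt_of_le one_pos hn
    have hinv1 : ‖u n‖⁻¹ ≤ 1 := by
      rw [inv_le_one_iff₀]; right; exact hn
    have hinv0 : 0 ≤ ‖u n‖⁻¹ := inv_nonneg.2 (le_of_lt h0)
    have key : c + ‖u n‖⁻¹ • (u n - c) = (1 - ‖u n‖⁻¹) • c + ‖u n‖⁻¹ • u n := by module
    rw [key]
    exact hconv hc (hu n) (by linarith) hinv0 (by ring)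
  have hlim : Filter.Tendsto (fun n => c + ‖u n‖⁻¹ • (u n - c)) Filter.atTop (nhds (e + c)) := by
    have h1 : Filter.Tendsto (fun n => (‖u n‖⁻¹ : ℝ)) Filter.atTop (nhds 0) :=
      hnorm.inv_tendsto_atTop
    have h2 : Filter.Tendsto (fun n => ‖u n‖⁻¹ • c) Filter.atTop (nhds ((0:ℝ) • c)) :=
      h1.smul_const c
    rw [zero_smul] at h2
    have h3 : Filter.Tendsto (fun n => ‖u n‖⁻¹ • (u n - c)) Filter.atTop (nhds e) := by
      have : (fun n => ‖u n‖⁻¹ • (u n - c)) = fun n => ‖u n‖⁻¹ • u n - ‖u n‖⁻¹ • c := by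
        funext n; rw [smul_sub]
      rw [this]
      simpa using he.sub h2
    have := h3.const_add c
    rwa [show c + e = e + c from add_comm c e] at this
  exact hcl.mem_of_tendsto hlim hmem

end Cones


noncomputable section Attain

open scoped RealInnerProductSpace

variable {X : Type*} [NormedAddCommGroup X] [InnerProductSpace ℝ X] [FiniteDimensional ℝ X]

/-- support functional attainment on the relative interior of the polar of the recession cone -/
theorem attain {U : Set X} (hUne : U.Nonempty) (hUcl : IsClosed U) (hUconv : Convex ℝ U)
    {p : X} (hp : p ∈ intrinsicInterior ℝ (polarCone (recCone U))) :
    ∃ z ∈ U, ∀ y ∈ U, ⟪p, y⟫ ≤ ⟪p, z⟫ := by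
  set KU := polarCone (recCone U) with hKU
  have hpK : p ∈ KU := intrinsicInterior_subset hp
  set L : Submodule ℝ X := (Submodule.span ℝ KU)ᗮ with hL
  have hmemL : ∀ e : X, e ∈ L ↔ ∀ k ∈ KU, ⟪k, e⟫ = 0 := by
    intro e
    constructor
    · intro he k hk
      exact (Submodule.mem_orthogonal _ e).1 he k (Submodule.subset_span hk)
    · intro h
      rw [hL, Submodule.mem_orthogonal]
      intro u hu
      induction hu using Submodule.span_induction with
      | mem x hx => exact h x hx
      | zero => simp
      | add x y _ _ hx hy => rw [inner_add_left, hx, hy]; ring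
      | smul a x _ hx => rw [real_inner_smul_left, hx]; ring
  have recbip : polarCone KU = recCone U :=
    bipolar (recCone_isClosed hUcl) (recCone_convex hUconv) (recCone_zero_mem U)
      (fun x y hx hy => recCone_add_mem hx hy)
  have hLrec : ∀ e ∈ L, e ∈ recCone U := by
    intro e he
    rw [← recbip]
    intro k hk
    exact le_of_eq ((hmemL e).1 he k hk)
  have hpL : ∀ l ∈ L, ⟪p, l⟫ = 0 := by
    intro l hl
    exact (Submodule.mem_orthogonal _ l).1 hl p (Submodule.subset_span hpK)
  set π : X → X := fun u => u - (L.orthogonalProjectionOnto u : X) with hπ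
  have hπU : ∀ u ∈ U, π u ∈ U := by
    intro u hu
    have hnegL : -((L.orthogonalProjectionOnto u : X)) ∈ L := neg_mem (L.orthogonalProjectionOnto u).2
    have := hLrec _ hnegL u hu
    rw [hπ]
    simpa [neg_add_eq_sub] using this
  have hπorth : ∀ u : X, π u ∈ Lᗮ := fun u => Submodule.sub_starProjection_mem_orthogonal (K := L) u
  have hπinner : ∀ u : X, ⟪p, π u⟫ = ⟪p, u⟫ := by
    intro u
    rw [hπ]
    simp only [inner_sub_right]
    rw [hpL _ (L.orthogonalProjectionOnto u).2]
    ring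
  obtain ⟨u₁, hu₁⟩ := hUne
  set c₀ := ⟪p, u₁⟫ with hc₀
  set A : Set X := {u : X | u ∈ U ∧ u ∈ (Lᗮ : Set X) ∧ c₀ ≤ ⟪p, u⟫} with hA
  have hu₁A : π u₁ ∈ A := ⟨hπU u₁ hu₁, hπorth u₁, le_of_eq (hπinner u₁).symm⟩
  have hAclosed : IsClosed A := by
    have heq : A = U ∩ ((Lᗮ : Set X) ∩ {u : X | c₀ ≤ ⟪p, u⟫}) := by
      ext u
      simp only [hA, Set.mem_setOf_eq, Set.mem_inter_iff, SetLike.mem_coe]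
    rw [heq]
    exact hUcl.inter ((Submodule.closed_of_finiteDimensional Lᗮ).inter
      (isClosed_le continuous_const (Continuous.inner continuous_const continuous_id)))
  have hAbdd : ∃ R : ℝ, ∀ u ∈ A, ‖u‖ ≤ R := by
    by_contra hunb
    push_neg at hunb
    have hseq : ∀ n : ℕ, ∃ u, u ∈ A ∧ (n : ℝ) < ‖u‖ := by
      intro n
      obtain ⟨u, huA, hn⟩ := hunb n
      exact ⟨u, huA, hn⟩
    choose u huA hun using hseq
    have hpos : ∀ n, (0 : ℝ) < ‖u n‖ := fun n =>
      lt_of_le_of_lt (Nat.cast_nonneg n) (hun n)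
    have hnorm : Filter.Tendsto (fun n => ‖u n‖) Filter.atTop Filter.atTop :=
      Filter.tendsto_atTop_mono (fun n => le_of_lt (hun n)) tendsto_natCast_atTop_atTop
    set v : ℕ → X := fun n => ‖u n‖⁻¹ • u n with hv
    have hvs : ∀ n, v n ∈ Metric.sphere (0 : X) 1 := by
      intro n
      rw [mem_sphere_zero_iff_norm, hv, norm_smul, Real.norm_eq_abs,
        abs_of_pos (inv_pos.2 (hpos n)), inv_mul_cancel₀ (ne_of_gt (hpos n))]
    obtain ⟨e, hes, φ, hφmono, hconv⟩ :=
      (isCompact_sphere (0 : X) 1).tendsto_subseq hvs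
    have hnorme : ‖e‖ = 1 := mem_sphere_zero_iff_norm.1 hes
    have hnormφ : Filter.Tendsto (fun n => ‖u (φ n)‖) Filter.atTop Filter.atTop :=
      hnorm.comp hφmono.tendsto_atTop
    have heRec : e ∈ recCone U :=
      horizon hUcl hUconv (fun n => (huA (φ n)).1) hnormφ hconv
    have heL' : e ∈ Lᗮ := by
      have hclosed : IsClosed (Lᗮ : Set X) := Submodule.closed_of_finiteDimensional Lᗮ
      refine hclosed.mem_of_tendsto hconv (Filter.Eventually.of_forall fun n => ?_)
      exact Submodule.smul_mem Lᗮ _ (huA (φ n)).2.1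
    have hinner_tendsto : Filter.Tendsto (fun n => ⟪p, v (φ n)⟫) Filter.atTop (nhds ⟪p, e⟫) :=
      ((Continuous.inner continuous_const continuous_id).tendsto e).comp hconv
    have hlow : Filter.Tendsto (fun n => ‖u (φ n)‖⁻¹ * c₀) Filter.atTop (nhds 0) := by
      have := hnormφ.inv_tendsto_atTop.mul_const c₀
      rwa [zero_mul] at this
    have hpe_ge : (0:ℝ) ≤ ⟪p, e⟫ := by
      refine le_of_tendsto_of_tendsto hlow hinner_tendsto (Filter.Eventually.of_forall fun n => ?_)
      show ‖u (φ n)‖⁻¹ * c₀ ≤ ⟪p, v (φ n)⟫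
      have h1 : ⟪p, v (φ n)⟫ = ‖u (φ n)‖⁻¹ * ⟪p, u (φ n)⟫ := real_inner_smul_right _ _ _
      rw [h1]
      exact mul_le_mul_of_nonneg_left (huA (φ n)).2.2 (inv_nonneg.2 (le_of_lt (hpos (φ n))))
    have hpe_le : ⟪p, e⟫ ≤ 0 := by
      have := hpK e heRec
      rwa [real_inner_comm] at this
    have hpe : ⟪e, p⟫ = 0 := by rw [real_inner_comm]; linarith
    have hkey : ∀ k ∈ KU, ⟪k, e⟫ = 0 := by
      intro k hk
      obtain ⟨t, ht, hmem⟩ := ri_prolong hp (subset_affineSpan ℝ KU hk)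
      have h1 : ⟪e, p + t • (p - k)⟫ ≤ 0 := hmem e heRec
      have h2 : ⟪e, k⟫ ≤ 0 := hk e heRec
      rw [inner_add_right, real_inner_smul_right, inner_sub_right, hpe] at h1
      have h3 : 0 ≤ ⟪e, k⟫ := by nlinarith
      rw [real_inner_comm]
      linarith
    have heL : e ∈ L := (hmemL e).2 hkey
    have : ⟪e, e⟫ = (0:ℝ) := (Submodule.mem_orthogonal _ e).1 heL' e heL
    have : e = 0 := inner_self_eq_zero.1 this
    rw [this, norm_zero] at hnorme
    norm_num at hnorme
  obtain ⟨R, hR⟩ := hAbdd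
  have hAcomp : IsCompact A := by
    refine (isCompact_closedBall (0 : X) R).of_isClosed_subset hAclosed ?_
    intro u hu
    rw [Metric.mem_closedBall, dist_zero_right]
    exact hR u hu
  have hcont : Continuous fun y : X => ⟪p, y⟫ := Continuous.inner continuous_const continuous_id
  obtain ⟨z, hzA, hzmax'⟩ := hAcomp.exists_isMaxOn ⟨π u₁, hu₁A⟩ hcont.continuousOn
  have hzmax : ∀ y ∈ A, ⟪p, y⟫ ≤ ⟪p, z⟫ := fun y hy => hzmax' hy
  refine ⟨z, hzA.1, fun y hy => ?_⟩
  rcases le_or_gt c₀ ⟪p, y⟫ with hyc | hyc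
  · have hπyA : π y ∈ A := ⟨hπU y hy, hπorth y, by rw [hπinner]; exact hyc⟩
    have := hzmax (π y) hπyA
    rwa [hπinner] at this
  · have := hzmax (π u₁) hu₁A
    rw [hπinner] at this
    calc ⟪p, y⟫ ≤ c₀ := le_of_lt hyc
      _ ≤ ⟪p, z⟫ := this

end Attain


noncomputable section ProjC

open scoped RealInnerProductSpace

variable {X : Type*} [NormedAddCommGroup X] [InnerProductSpace ℝ X] [FiniteDimensional ℝ X]

/-- variational characterization of the metric projection -/
theorem proj_char {U : Set X} (hUconv : Convex ℝ U) {P : X → X}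
    (hP : IsMetricProjection P U) (x : X) :
    P x ∈ U ∧ ∀ y ∈ U, ⟪x - P x, y - P x⟫ ≤ 0 := by
  obtain ⟨hmem, hmin⟩ := hP x
  refine ⟨hmem, ?_⟩
  have : Nonempty U := ⟨⟨P x, hmem⟩⟩
  have heq : ‖x - P x‖ = ⨅ w : U, ‖x - w‖ := by
    apply le_antisymm
    · exact le_ciInf fun w => hmin w w.2
    · have hbdd : BddBelow (Set.range fun w : U => ‖x - w‖) :=
        ⟨0, by rintro r ⟨w, rfl⟩; exact norm_nonneg _⟩
      exact ciInf_le hbdd ⟨P x, hmem⟩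
  exact (norm_eq_iInf_iff_real_inner_le_zero hUconv hmem).1 heq

theorem proj_firm {U : Set X} (hUconv : Convex ℝ U) {P : X → X}
    (hP : IsMetricProjection P U) (x y : X) :
    ⟪P x - P y, P x - P y⟫ ≤ ⟪x - y, P x - P y⟫ := by
  have h1 := (proj_char hUconv hP x).2 (P y) (proj_char hUconv hP y).1
  have h2 := (proj_char hUconv hP y).2 (P x) (proj_char hUconv hP x).1
  have e1 : ⟪x - P x, P y - P x⟫ + ⟪y - P y, P x - P y⟫
      = ⟪x - y, P y - P x⟫ + ⟪P x - P y, P x - P y⟫ := by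
    have : (x : X) - P x = (x - y) - (P x - P y) + (y - P y) := by abel
    rw [this, inner_add_left, inner_sub_left]
    have c1 : ⟪P x - P y, P y - P x⟫ = -⟪P x - P y, P x - P y⟫ := by
      rw [show (P y : X) - P x = -(P x - P y) from by abel, inner_neg_right]
    have c2 : ⟪y - P y, P y - P x⟫ = -⟪y - P y, P x - P y⟫ := by
      rw [show (P y : X) - P x = -(P x - P y) from by abel, inner_neg_right]
    rw [c1, c2]
    ring
  have c3 : ⟪x - y, P y - P x⟫ = -⟪x - y, P x - P y⟫ := by
    rw [show (P y : X) - P x = -(P x - P y) from by abel, inner_neg_right]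
  nlinarith [h1, h2, e1, c3]

theorem proj_nonexpansive {U : Set X} (hUconv : Convex ℝ U) {P : X → X}
    (hP : IsMetricProjection P U) (x y : X) : ‖P x - P y‖ ≤ ‖x - y‖ := by
  have hf := proj_firm hUconv hP x y
  have hcs : ⟪x - y, P x - P y⟫ ≤ ‖x - y‖ * ‖P x - P y‖ := real_inner_le_norm _ _
  have hsq : ⟪P x - P y, P x - P y⟫ = ‖P x - P y‖ * ‖P x - P y‖ :=
    real_inner_self_eq_norm_mul_norm _
  rcases eq_or_lt_of_le (norm_nonneg (P x - P y)) with h0 | h0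
  · rw [← h0]; exact norm_nonneg _
  · nlinarith

theorem reflect_nonexpansive {U : Set X} (hUconv : Convex ℝ U) {P : X → X}
    (hP : IsMetricProjection P U) (x y : X) :
    ‖((2:ℝ) • P x - x) - ((2:ℝ) • P y - y)‖ ≤ ‖x - y‖ := by
  have hf := proj_firm hUconv hP x y
  have hid : ((2:ℝ) • P x - x) - ((2:ℝ) • P y - y) = (2:ℝ) • (P x - P y) - (x - y) := by module
  have hexp : ∀ d e : X, ⟪(2:ℝ) • d - e, (2:ℝ) • d - e⟫
      = 4 * ⟪d, d⟫ - 4 * ⟪e, d⟫ + ⟪e, e⟫ := by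
    intro d e
    simp only [inner_sub_left, inner_sub_right, real_inner_smul_left, real_inner_smul_right]
    rw [real_inner_comm d e]
    ring
  have h1 : ‖((2:ℝ) • P x - x) - ((2:ℝ) • P y - y)‖ * ‖((2:ℝ) • P x - x) - ((2:ℝ) • P y - y)‖
      ≤ ‖x - y‖ * ‖x - y‖ := by
    rw [← real_inner_self_eq_norm_mul_norm, ← real_inner_self_eq_norm_mul_norm, hid,
      hexp (P x - P y) (x - y)]
    nlinarith
  nlinarith [norm_nonneg (((2:ℝ) • P x - x) - ((2:ℝ) • P y - y)), norm_nonneg (x - y)]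

end ProjC


noncomputable section DR

open scoped RealInnerProductSpace

variable {X : Type*} [NormedAddCommGroup X] [InnerProductSpace ℝ X] [FiniteDimensional ℝ X]
variable {U V : Set X} {PU PV : X → X}

theorem F_formula (PU PV : X → X) (x : X) :
    x - drT PU PV x = PU x - PV ((2:ℝ) • PU x - x) := by
  simp only [drT]; abel

theorem drT_nonexpansive (hUconv : Convex ℝ U) (hVconv : Convex ℝ V)
    (hPU : IsMetricProjection PU U) (hPV : IsMetricProjection PV V) (x y : X) :
    ‖drT PU PV x - drT PU PV y‖ ≤ ‖x - y‖ := by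
  have hR : ‖((2:ℝ) • PU x - x) - ((2:ℝ) • PU y - y)‖ ≤ ‖x - y‖ :=
    reflect_nonexpansive hUconv hPU x y
  have hRV : ‖((2:ℝ) • PV ((2:ℝ) • PU x - x) - ((2:ℝ) • PU x - x))
      - ((2:ℝ) • PV ((2:ℝ) • PU y - y) - ((2:ℝ) • PU y - y))‖
      ≤ ‖((2:ℝ) • PU x - x) - ((2:ℝ) • PU y - y)‖ :=
    reflect_nonexpansive hVconv hPV _ _
  have hid : drT PU PV x - drT PU PV y
      = (1/2 : ℝ) • ((x - y) + (((2:ℝ) • PV ((2:ℝ) • PU x - x) - ((2:ℝ) • PU x - x))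
        - ((2:ℝ) • PV ((2:ℝ) • PU y - y) - ((2:ℝ) • PU y - y)))) := by
    simp only [drT]; module
  rw [hid, norm_smul, Real.norm_eq_abs]
  rw [abs_of_pos (by norm_num : (0:ℝ) < 1/2)]
  have htri := norm_add_le (x - y) (((2:ℝ) • PV ((2:ℝ) • PU x - x) - ((2:ℝ) • PU x - x))
        - ((2:ℝ) • PV ((2:ℝ) • PU y - y) - ((2:ℝ) • PU y - y)))
  nlinarith [le_trans hRV hR]

theorem F_continuous (hUconv : Convex ℝ U) (hVconv : Convex ℝ V)
    (hPU : IsMetricProjection PU U) (hPV : IsMetricProjection PV V) :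
    Continuous fun x : X => x - drT PU PV x := by
  have hPUc : Continuous PU := by
    refine (LipschitzWith.of_dist_le_mul (K := 1) fun x y => ?_).continuous
    rw [dist_eq_norm, dist_eq_norm, NNReal.coe_one, one_mul]
    exact proj_nonexpansive hUconv hPU x y
  have hPVc : Continuous PV := by
    refine (LipschitzWith.of_dist_le_mul (K := 1) fun x y => ?_).continuous
    rw [dist_eq_norm, dist_eq_norm, NNReal.coe_one, one_mul]
    exact proj_nonexpansive hVconv hPV x y
  have heq : (fun x : X => x - drT PU PV x) = fun x => PU x - PV ((2:ℝ) • PU x - x) :=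
    funext (F_formula PU PV)
  rw [heq]
  exact hPUc.sub (hPVc.comp ((continuous_const.smul hPUc).sub continuous_id))

theorem exists_resolvent (hUconv : Convex ℝ U) (hVconv : Convex ℝ V)
    (hPU : IsMetricProjection PU U) (hPV : IsMetricProjection PV V)
    (w : X) {ε : ℝ} (hε : 0 < ε) :
    ∃ x : X, (x - drT PU PV x) + ε • x = w := by
  have h1ε : (0:ℝ) < 1 + ε := by linarith
  set K : NNReal := ⟨(1+ε)⁻¹, by positivity⟩ with hK
  set Φ : X → X := fun x => (1+ε)⁻¹ • (drT PU PV x + w) with hΦ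
  have hcontr : ContractingWith K Φ := by
    constructor
    · show K < 1
      rw [← NNReal.coe_lt_coe]
      show (1+ε)⁻¹ < (1:ℝ)
      rw [inv_lt_one_iff₀]
      right; linarith
    · apply LipschitzWith.of_dist_le_mul
      intro x y
      rw [dist_eq_norm, dist_eq_norm]
      have hd : Φ x - Φ y = (1+ε)⁻¹ • (drT PU PV x - drT PU PV y) := by
        rw [hΦ]; simp only []; module
      rw [hd, norm_smul, Real.norm_eq_abs, abs_of_pos (by positivity : (0:ℝ) < (1+ε)⁻¹)]
      exact mul_le_mul_of_nonneg_left (drT_nonexpansive hUconv hVconv hPU hPV x y)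
        (by positivity)
  obtain ⟨x, hx, -⟩ := hcontr.exists_fixedPoint (0 : X) (edist_ne_top _ _)
  refine ⟨x, ?_⟩
  have h1 : drT PU PV x + w = (1+ε) • x := by
    have h := congrArg (fun z : X => (1+ε) • z) hx
    simp only [hΦ] at h
    rw [smul_smul, mul_inv_cancel₀ (ne_of_gt h1ε), one_smul] at h
    exact h
  have hw : w = x + ε • x - drT PU PV x := by
    rw [show x + ε • x = (1+ε) • x from by module, ← h1]; abel
  rw [hw]; abel

theorem F_monotone (hUconv : Convex ℝ U) (hVconv : Convex ℝ V)
    (hPU : IsMetricProjection PU U) (hPV : IsMetricProjection PV V) (x y : X) :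
    0 ≤ ⟪(x - drT PU PV x) - (y - drT PU PV y), x - y⟫ := by
  set Nx := (2:ℝ) • PV ((2:ℝ) • PU x - x) - ((2:ℝ) • PU x - x) with hNx
  set Ny := (2:ℝ) • PV ((2:ℝ) • PU y - y) - ((2:ℝ) • PU y - y) with hNy
  have hN : ‖Nx - Ny‖ ≤ ‖x - y‖ := by
    rw [hNx, hNy]
    exact le_trans (reflect_nonexpansive hVconv hPV _ _) (reflect_nonexpansive hUconv hPU x y)
  have hid : (x - drT PU PV x) - (y - drT PU PV y) = (1/2:ℝ) • ((x - y) - (Nx - Ny)) := by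
    rw [hNx, hNy]; simp only [drT]; module
  rw [hid, real_inner_smul_left, inner_sub_left]
  have hcs : ⟪Nx - Ny, x - y⟫ ≤ ‖Nx - Ny‖ * ‖x - y‖ := real_inner_le_norm _ _
  have hsq : ⟪x - y, x - y⟫ = ‖x - y‖ * ‖x - y‖ := real_inner_self_eq_norm_mul_norm _
  nlinarith [norm_nonneg (x - y)]

end DR



noncomputable section Step1

open scoped RealInnerProductSpace

variable {X : Type*} [NormedAddCommGroup X] [InnerProductSpace ℝ X] [FiniteDimensional ℝ X]
variable {U V : Set X} {PU PV : X → X}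

theorem F_mem_D (hUconv : Convex ℝ U) (hVconv : Convex ℝ V)
    (hPU : IsMetricProjection PU U) (hPV : IsMetricProjection PV V) (x : X) :
    (x - drT PU PV x) ∈ (U - V) ∩ (polarCone (recCone U) + polarCone (recCone V)) := by
  have haU : PU x ∈ U := (hPU x).1
  have hbV : PV ((2:ℝ) • PU x - x) ∈ V := (hPV ((2:ℝ) • PU x - x)).1
  constructor
  · rw [F_formula]
    exact Set.sub_mem_sub haU hbV
  · refine ⟨x - PU x, ?_, (2:ℝ) • PU x - x - PV ((2:ℝ) • PU x - x), ?_, ?_⟩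
    · intro k hk
      have h := (proj_char hUconv hPU x).2 (k + PU x) (hk (PU x) haU)
      rw [add_sub_cancel_right] at h
      rwa [real_inner_comm]
    · intro k hk
      have h := (proj_char hVconv hPV ((2:ℝ) • PU x - x)).2
        (k + PV ((2:ℝ) • PU x - x)) (hk _ hbV)
      rw [add_sub_cancel_right] at h
      rwa [real_inner_comm]
    · rw [F_formula]; module

theorem step1 (hUconv : Convex ℝ U) (hVconv : Convex ℝ V)
    (hPU : IsMetricProjection PU U) (hPV : IsMetricProjection PV V)
    {w u₀ v₀ z₁ z₂ p q : X}
    (hu₀ : u₀ ∈ U) (hv₀ : v₀ ∈ V) (hw1 : u₀ - v₀ = w)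
    (hz₁ : z₁ ∈ U) (hz₂ : z₂ ∈ V)
    (hpN : ∀ y ∈ U, ⟪p, y - z₁⟫ ≤ 0) (hqN : ∀ y ∈ V, ⟪q, y - z₂⟫ ≤ 0)
    (hw2 : p + q = w) :
    w ∈ closure (Set.range fun x : X => x - drT PU PV x) := by
  rw [Metric.mem_closure_iff]
  intro δ hδ
  set M : ℝ := ⟪p, z₁⟫ + ⟪q, z₂⟫ + (1/4) * ⟪q - v₀, q - v₀⟫ with hM
  set ε : ℝ := min 1 (δ^2 / (2 * (|M| + 1))) with hε
  have hε0 : 0 < ε := lt_min one_pos (by positivity)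
  obtain ⟨x, hx⟩ := exists_resolvent hUconv hVconv hPU hPV w hε0
  refine ⟨x - drT PU PV x, Set.mem_range_self x, ?_⟩
  have hdist : dist w (x - drT PU PV x) = ε * ‖x‖ := by
    rw [dist_eq_norm, ← hx]
    have h2 : (x - drT PU PV x) + ε • x - (x - drT PU PV x) = ε • x := by abel
    rw [h2, norm_smul, Real.norm_eq_abs, abs_of_pos hε0]
  set a := PU x with ha
  set b := PV ((2:ℝ) • PU x - x) with hb
  have hFP : a - b + ε • x = w := by
    rw [← hx, F_formula]
  have haU : a ∈ U := (hPU x).1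
  have hbV : b ∈ V := (hPV _).1
  have hA1 : ⟪x - a, u₀ - a⟫ ≤ 0 := (proj_char hUconv hPU x).2 u₀ hu₀
  have hA2 : ⟪((2:ℝ) • a - x) - b, v₀ - b⟫ ≤ 0 :=
    (proj_char hVconv hPV ((2:ℝ) • a - x)).2 v₀ hv₀
  have hA3 : ⟪p, a - z₁⟫ ≤ 0 := hpN a haU
  have hA4 : ⟪q, b - z₂⟫ ≤ 0 := hqN b hbV
  have hsq : (0:ℝ) ≤ ⟪(q - v₀) - (2:ℝ) • (a - b), (q - v₀) - (2:ℝ) • (a - b)⟫ :=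
    real_inner_self_nonneg
  -- eliminate u₀ and p
  have hu₀eq : u₀ = a - b + ε • x + v₀ := by rw [hFP, ← hw1]; abel
  have hpeq : p = a - b + ε • x - q := by
    rw [hFP, ← hw2]; abel
  rw [hu₀eq] at hA1
  rw [hpeq] at hA3
  have hkey : ε * ⟪x, x⟫ ≤ M := by
    rw [hM, hpeq]
    simp only [inner_sub_left, inner_sub_right, inner_add_left, inner_add_right,
      real_inner_smul_left, real_inner_smul_right] at hA1 hA2 hA3 hA4 hsq ⊢
    simp only [real_inner_comm a x, real_inner_comm b x, real_inner_comm b a, real_inner_comm v₀ x, real_inner_comm v₀ a, real_inner_comm v₀ b, real_inner_comm q x, real_inner_comm q a, real_inner_comm q b, real_inner_comm q v₀, real_inner_comm z₁ x, real_inner_comm z₁ a, real_inner_comm z₁ b, real_inner_comm z₁ v₀, real_inner_comm z₁ q, real_inner_comm z₂ x, real_inner_comm z₂ a, real_inner_comm z₂ b, real_inner_comm z₂ v₀, real_inner_comm z₂ q, real_inner_comm z₂ z₁] at hA1 hA2 hA3 hA4 hsq ⊢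
    nlinarith [hA1, hA2, hA3, hA4, hsq]
  have hxx : ⟪x, x⟫ = ‖x‖ * ‖x‖ := real_inner_self_eq_norm_mul_norm x
  have h1 : ε * (ε * ⟪x, x⟫) ≤ ε * M := mul_le_mul_of_nonneg_left hkey (le_of_lt hε0)
  have h2 : ε * M ≤ ε * |M| := mul_le_mul_of_nonneg_left (le_abs_self M) hε0.le
  have h3 : ε ≤ δ^2/(2*(|M|+1)) := min_le_right _ _
  have h4 : ε * |M| < δ^2 := by
    calc ε * |M| ≤ (δ^2/(2*(|M|+1))) * |M| := mul_le_mul_of_nonneg_right h3 (abs_nonneg M)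
      _ < δ^2 := by
          rw [div_mul_eq_mul_div, div_lt_iff₀ (by positivity)]
          nlinarith [abs_nonneg M]
  rw [hxx] at h1
  rw [hdist]
  nlinarith [norm_nonneg x, hδ, mul_nonneg hε0.le (norm_nonneg x), h1, h2, h4]

end Step1


noncomputable section Qual

open scoped RealInnerProductSpace

variable {X : Type*} [NormedAddCommGroup X] [InnerProductSpace ℝ X] [FiniteDimensional ℝ X]

theorem polarCone_smul_mem {K : Set X} {k : X} (hk : k ∈ polarCone K) {t : ℝ} (ht : 0 ≤ t) :
    t • k ∈ polarCone K := by
  intro r hr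
  have := hk r hr
  rw [real_inner_smul_right]
  nlinarith

theorem qual {U V : Set X} (hUne : U.Nonempty) (hVne : V.Nonempty)
    (hUcl : IsClosed U) (hVcl : IsClosed V)
    (hUconv : Convex ℝ U) (hVconv : Convex ℝ V) :
    (intrinsicInterior ℝ (U - V) ∩
      intrinsicInterior ℝ (polarCone (recCone U) + polarCone (recCone V))).Nonempty := by
  set K : Set X := polarCone (recCone U) + polarCone (recCone V) with hK
  have hKconv : Convex ℝ K := (polarCone_convex _).add (polarCone_convex _)
  have hKne : K.Nonempty := ⟨0, 0, polarCone_zero_mem _, 0, polarCone_zero_mem _, by simp⟩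
  have hAconv : Convex ℝ (U - V) := hUconv.sub hVconv
  have hAne : (U - V).Nonempty := ⟨hUne.choose - hVne.choose,
    Set.sub_mem_sub hUne.choose_spec hVne.choose_spec⟩
  by_contra hcon
  rw [Set.not_nonempty_iff_eq_empty] at hcon
  set R₁ := intrinsicInterior ℝ (U - V) with hR₁
  set R₂ := intrinsicInterior ℝ K with hR₂
  have hR₁ne : R₁.Nonempty := hAne.intrinsicInterior hAconv
  have hR₂ne : R₂.Nonempty := hKne.intrinsicInterior hKconv
  have hR₁conv : Convex ℝ R₁ := ri_convex hAconv
  have hR₂conv : Convex ℝ R₂ := ri_convex hKconv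
  set S : Set X := R₁ - R₂ with hS
  have hSconv : Convex ℝ S := hR₁conv.sub hR₂conv
  have hSne : S.Nonempty := ⟨hR₁ne.choose - hR₂ne.choose,
    Set.sub_mem_sub hR₁ne.choose_spec hR₂ne.choose_spec⟩
  have h0S : (0 : X) ∉ S := by
    rintro ⟨r₁, hr₁, r₂, hr₂, h⟩
    have : r₁ = r₂ := by rwa [sub_eq_zero] at h
    rw [this] at hr₁
    have : r₂ ∈ R₁ ∩ R₂ := ⟨hr₁, hr₂⟩
    rw [hcon] at this
    exact this
  set W : Set X := closure S with hW
  have hWconv : Convex ℝ W := hSconv.closure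
  have hWcl : IsClosed W := isClosed_closure
  -- get a nonzero separating functional φ with ⟪φ, s⟫ ≤ 0 on S
  have hsep : ∃ φ : X, φ ≠ 0 ∧ ∀ s ∈ S, ⟪φ, s⟫ ≤ 0 := by
    by_cases htop : affineSpan ℝ W = ⊤
    · -- full-dimensional case
      have hri : intrinsicInterior ℝ W = interior W := ri_eq_interior_of_span_top htop
      have hint_ne : (interior W).Nonempty := by
        rw [← hri]
        exact (hSne.mono subset_closure).intrinsicInterior hWconv
      have h0int : (0 : X) ∉ interior W := by
        rw [← hri]
        intro h0
        have h1 : (0:X) ∈ intrinsicInterior ℝ S := by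
          rwa [← ri_closure_eq hSconv]
        exact h0S (intrinsicInterior_subset h1)
      obtain ⟨f, hf⟩ := geometric_hahn_banach_open_point hWconv.interior isOpen_interior h0int
      set φ := (InnerProductSpace.toDual ℝ X).symm f with hφ
      have hφf : ∀ x : X, ⟪φ, x⟫ = f x := fun x => InnerProductSpace.toDual_symm_apply
      have hfneg : ∀ a ∈ interior W, f a < 0 := by
        intro a ha
        have := hf a ha
        rwa [map_zero] at this
      have hφne : φ ≠ 0 := by
        intro h0
        obtain ⟨a, ha⟩ := hint_ne
        have h1 := hfneg a ha
        have h2 := hφf a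
        rw [h0, inner_zero_left] at h2
        rw [← h2] at h1
        exact lt_irrefl 0 h1
      refine ⟨φ, hφne, fun s hs => ?_⟩
      have hsW : s ∈ closure (interior W) := by
        have hcl1 : closure (intrinsicInterior ℝ W) = closure W := closure_ri_eq hWconv
        rw [← hri, hcl1]
        exact subset_closure (subset_closure hs)
      have hle : closure (interior W) ⊆ {x : X | f x ≤ 0} :=
        closure_minimal (fun a ha => le_of_lt (hfneg a ha))
          (isClosed_le f.continuous continuous_const)
      rw [hφf]
      exact hle hsW
    · -- lower-dimensional case
      by_cases h0W : (0 : X) ∈ W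
      · -- 0 in the affine span; take a normal direction to the span
        set Wdir := (affineSpan ℝ W).direction with hWdir
        have hWdir_ne_top : Wdir ≠ ⊤ := by
          intro htop'
          apply htop
          rw [eq_top_iff]
          intro x _
          have hx_dir : x ∈ Wdir := by rw [htop']; trivial
          have h0span : (0 : X) ∈ affineSpan ℝ W := subset_affineSpan ℝ W h0W
          have := AffineSubspace.vadd_mem_of_mem_direction hx_dir h0span
          simpa using this
        have hbot : Wdirᗮ ≠ ⊥ := by
          intro hb
          exact hWdir_ne_top (Submodule.orthogonal_eq_bot_iff.1 hb)
        obtain ⟨ψ, hψmem, hψne⟩ := Submodule.ne_bot_iff _ |>.1 hbot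
        refine ⟨ψ, hψne, fun s hs => ?_⟩
        have hsdir : s ∈ Wdir := by
          have hsspan : s ∈ affineSpan ℝ W := subset_affineSpan ℝ W (subset_closure hs)
          have h0span : (0 : X) ∈ affineSpan ℝ W := subset_affineSpan ℝ W h0W
          have := AffineSubspace.vsub_mem_direction hsspan h0span
          simpa using this
        have := (Submodule.mem_orthogonal _ ψ).1 hψmem s hsdir
        rw [real_inner_comm] at this
        exact le_of_eq this
      · -- 0 not in closure of S: separate strictly
        obtain ⟨f, u, hfu, huf⟩ := geometric_hahn_banach_closed_point hWconv hWcl h0W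
        set φ := (InnerProductSpace.toDual ℝ X).symm f with hφ
        have hφf : ∀ x : X, ⟪φ, x⟫ = f x := fun x => InnerProductSpace.toDual_symm_apply
        have hu0 : u < 0 := by
          have := huf
          rwa [map_zero] at this
        have hφne : φ ≠ 0 := by
          intro h0
          obtain ⟨s, hs⟩ := hSne
          have h1 := hfu s (subset_closure hs)
          have h2 := hφf s
          rw [h0, inner_zero_left] at h2
          rw [← h2] at h1
          linarith
        refine ⟨φ, hφne, fun s hs => ?_⟩
        rw [hφf]
        have := hfu s (subset_closure hs)
        linarith
  obtain ⟨φ, hφne, hφS⟩ := hsep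
  -- extend the separation to (U - V) and K
  have hsep2 : ∀ s₁ ∈ U - V, ∀ k ∈ K, ⟪φ, s₁⟫ ≤ ⟪φ, k⟫ := by
    have h1 : ∀ r₁ ∈ R₁, ∀ r₂ ∈ R₂, ⟪φ, r₁⟫ ≤ ⟪φ, r₂⟫ := by
      intro r₁ hr₁ r₂ hr₂
      have := hφS (r₁ - r₂) (Set.sub_mem_sub hr₁ hr₂)
      rw [inner_sub_right] at this
      linarith
    have h2 : ∀ s₁ ∈ closure R₁, ∀ r₂ ∈ R₂, ⟪φ, s₁⟫ ≤ ⟪φ, r₂⟫ := by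
      intro s₁ hs₁ r₂ hr₂
      have hsub : closure R₁ ⊆ {x : X | ⟪φ, x⟫ ≤ ⟪φ, r₂⟫} :=
        closure_minimal (fun a ha => h1 a ha r₂ hr₂)
          (isClosed_le (Continuous.inner continuous_const continuous_id) continuous_const)
      exact hsub hs₁
    have h3 : ∀ s₁ ∈ closure R₁, ∀ s₂ ∈ closure R₂, ⟪φ, s₁⟫ ≤ ⟪φ, s₂⟫ := by
      intro s₁ hs₁ s₂ hs₂
      have hsub : closure R₂ ⊆ {x : X | ⟪φ, s₁⟫ ≤ ⟪φ, x⟫} :=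
        closure_minimal (fun a ha => h2 s₁ hs₁ a ha)
          (isClosed_le continuous_const (Continuous.inner continuous_const continuous_id))
      exact hsub hs₂
    intro s₁ hs₁ k hk
    have hc₁ : s₁ ∈ closure R₁ := by
      rw [hR₁, closure_ri_eq hAconv]
      exact subset_closure hs₁
    have hc₂ : k ∈ closure R₂ := by
      rw [hR₂, closure_ri_eq hKconv]
      exact subset_closure hk
    exact h3 s₁ hc₁ k hc₂
  -- φ is nonnegative on the cone K
  have hK0 : ∀ k ∈ K, 0 ≤ ⟪φ, k⟫ := by
    intro k hk
    by_contra hneg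
    push_neg at hneg
    set c := ⟪φ, hUne.choose - hVne.choose⟫ with hc
    have hkneg : 0 < -⟪φ, k⟫ := by linarith
    set t := (|c| + 1) / (-⟪φ, k⟫) with ht
    have ht0 : 0 ≤ t := le_of_lt (div_pos (by positivity) hkneg)
    have htk : t • k ∈ K := by
      obtain ⟨k₁, hk₁, k₂, hk₂, hksum⟩ := hk
      refine ⟨t • k₁, polarCone_smul_mem hk₁ ht0, t • k₂, polarCone_smul_mem hk₂ ht0, ?_⟩
      show t • k₁ + t • k₂ = t • k
      rw [← smul_add]
      rw [show k₁ + k₂ = k from hksum]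
    have := hsep2 _ (Set.sub_mem_sub hUne.choose_spec hVne.choose_spec) _ htk
    rw [real_inner_smul_right] at this
    have htval : t * ⟪φ, k⟫ = -(|c| + 1) := by
      rw [ht, div_mul_eq_mul_div, div_eq_iff (ne_of_gt hkneg)]
      ring
    rw [htval] at this
    have : c ≤ -(|c| + 1) := this
    have := neg_abs_le c
    linarith
  -- hence -φ is in the polar cone of K, so in rec V
  have hψV : -φ ∈ recCone V := by
    have hpol : -φ ∈ polarCone (polarCone (recCone V)) := by
      intro k hk
      have hkK : k ∈ K := ⟨0, polarCone_zero_mem _, k, hk, by simp⟩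
      have := hK0 k hkK
      rw [inner_neg_right, real_inner_comm]
      linarith
    rwa [bipolar (recCone_isClosed hVcl) (recCone_convex hVconv) (recCone_zero_mem V)
      (fun x y hx hy => recCone_add_mem hx hy)] at hpol
  -- contradiction: V is unbounded in the direction -φ
  have hφφ : (0:ℝ) < ⟪φ, φ⟫ := by
    rcases lt_or_eq_of_le (real_inner_self_nonneg (x := φ)) with h | h
    · exact h
    · exact absurd (inner_self_eq_zero.1 h.symm) hφne
  set c := ⟪φ, hUne.choose - hVne.choose⟫ with hc
  obtain ⟨n, hn⟩ := exists_nat_gt ((-c) / ⟪φ, φ⟫)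
  have hvn : hVne.choose + (n : ℝ) • (-φ) ∈ V := recCone_nsmul hψV hVne.choose_spec n
  have hmem : hUne.choose - (hVne.choose + (n : ℝ) • (-φ)) ∈ U - V :=
    Set.sub_mem_sub hUne.choose_spec hvn
  have h0K : (0:X) ∈ K := ⟨0, polarCone_zero_mem _, 0, polarCone_zero_mem _, by simp⟩
  have := hsep2 _ hmem 0 h0K
  rw [inner_zero_right] at this
  have hexp : ⟪φ, hUne.choose - (hVne.choose + (n : ℝ) • (-φ))⟫
      = c + (n : ℝ) * ⟪φ, φ⟫ := by
    rw [hc]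
    rw [show hUne.choose - (hVne.choose + (n : ℝ) • (-φ))
      = (hUne.choose - hVne.choose) + (n : ℝ) • φ from by module]
    rw [inner_add_right, real_inner_smul_right]
  rw [hexp] at this
  have hnn : (-c) / ⟪φ, φ⟫ * ⟪φ, φ⟫ < (n:ℝ) * ⟪φ, φ⟫ :=
    mul_lt_mul_of_pos_right hn hφφ
  rw [div_mul_cancel₀ _ (ne_of_gt hφφ)] at hnn
  linarith

end Qual


noncomputable section Step2

open scoped RealInnerProductSpace

variable {X : Type*} [NormedAddCommGroup X] [InnerProductSpace ℝ X] [FiniteDimensional ℝ X]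

theorem step2 {U V : Set X} {PU PV : X → X}
    (hUconv : Convex ℝ U) (hVconv : Convex ℝ V)
    (hPU : IsMetricProjection PU U) (hPV : IsMetricProjection PV V)
    {w : X}
    (hw : w ∈ intrinsicInterior ℝ ((U - V) ∩ (polarCone (recCone U) + polarCone (recCone V))))
    (hDsub : ((U - V) ∩ (polarCone (recCone U) + polarCone (recCone V))) ⊆
      closure (Set.range fun x : X => x - drT PU PV x)) :
    w ∈ Set.range fun x : X => x - drT PU PV x := by
  set D : Set X := (U - V) ∩ (polarCone (recCone U) + polarCone (recCone V)) with hD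
  set ε : ℕ → ℝ := fun n => (1:ℝ)/(n+1) with hε
  have hε0 : ∀ n, 0 < ε n := fun n => by positivity
  have hεlim : Filter.Tendsto ε Filter.atTop (nhds 0) :=
    tendsto_one_div_add_atTop_nhds_zero_nat
  have hxex : ∀ n : ℕ, ∃ x : X, (x - drT PU PV x) + ε n • x = w := fun n =>
    exists_resolvent hUconv hVconv hPU hPV w (hε0 n)
  choose x hx using hxex
  have hFcont : Continuous fun z : X => z - drT PU PV z := F_continuous hUconv hVconv hPU hPV
  by_cases hcase : ∃ Rb : ℝ, ∀ N : ℕ, ∃ n, N ≤ n ∧ ‖x n‖ ≤ Rb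
  · -- bounded subsequence: extract a convergent subsequence, its limit is a solution
    obtain ⟨Rb, hRb⟩ := hcase
    choose g hg1 hg2 using hRb
    set φ : ℕ → ℕ := fun n => Nat.rec (g 0) (fun _ ih => g (ih + 1)) n with hφ
    have hφsucc : ∀ n, φ (n + 1) = g (φ n + 1) := fun n => rfl
    have hφmono : StrictMono φ := by
      apply strictMono_nat_of_lt_succ
      intro n
      rw [hφsucc]
      exact lt_of_lt_of_le (Nat.lt_succ_self _) (hg1 (φ n + 1))
    have hφbd : ∀ n, ‖x (φ n)‖ ≤ Rb := by
      intro n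
      cases n with
      | zero => exact hg2 0
      | succ m => rw [hφsucc]; exact hg2 (φ m + 1)
    have hball : ∀ n, x (φ n) ∈ Metric.closedBall (0:X) Rb := by
      intro n
      rw [Metric.mem_closedBall, dist_zero_right]
      exact hφbd n
    obtain ⟨xb, -, ψ, hψmono, hψconv⟩ :=
      (isCompact_closedBall (0:X) Rb).tendsto_subseq hball
    have hRb0 : 0 ≤ Rb := le_trans (norm_nonneg _) (hφbd 0)
    have hεφ : Filter.Tendsto (fun n => ε (φ (ψ n))) Filter.atTop (nhds 0) := by
      apply squeeze_zero (fun n => le_of_lt (hε0 _)) (fun n => ?_) hεlim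
      · rw [hε]
        apply div_le_div_of_nonneg_left one_pos.le (by positivity)
        have hle : n ≤ φ (ψ n) := le_trans hψmono.le_apply hφmono.le_apply
        have : (n:ℝ) ≤ ((φ (ψ n)):ℝ) := by exact_mod_cast hle
        linarith
    have hsmul0 : Filter.Tendsto (fun n => ε (φ (ψ n)) • x (φ (ψ n))) Filter.atTop (nhds 0) := by
      apply squeeze_zero_norm (fun n => ?_) (by simpa using hεφ.mul_const Rb)
      rw [norm_smul, Real.norm_eq_abs, abs_of_pos (hε0 _)]
      exact mul_le_mul_of_nonneg_left (hφbd (ψ n)) (le_of_lt (hε0 _))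
    have hFconv : Filter.Tendsto (fun n => (x (φ (ψ n)) - drT PU PV (x (φ (ψ n)))))
        Filter.atTop (nhds (xb - drT PU PV xb)) := (hFcont.tendsto xb).comp hψconv
    have hFconv2 : Filter.Tendsto (fun n => (x (φ (ψ n)) - drT PU PV (x (φ (ψ n)))))
        Filter.atTop (nhds w) := by
      have heq : ∀ n, (x (φ (ψ n)) - drT PU PV (x (φ (ψ n))))
          = w - ε (φ (ψ n)) • x (φ (ψ n)) := by
        intro n
        rw [← hx (φ (ψ n))]; abel
      simp only [heq]
      have := (tendsto_const_nhds (x := w) (f := Filter.atTop (α := ℕ))).sub hsmul0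
      simpa using this
    have : xb - drT PU PV xb = w := tendsto_nhds_unique hFconv hFconv2
    exact ⟨xb, this⟩
  · -- norms tend to infinity: derive a contradiction via a normalized cluster direction
    push_neg at hcase
    have hdiv : ∀ Rb : ℝ, ∃ N : ℕ, ∀ n, N ≤ n → Rb < ‖x n‖ := by
      intro Rb
      obtain ⟨N, hN⟩ := hcase Rb
      exact ⟨N, fun n hn => hN n hn⟩
    obtain ⟨N₀, hN₀⟩ := hdiv 1
    set y : ℕ → X := fun n => x (n + N₀) with hy
    set δ : ℕ → ℝ := fun n => ε (n + N₀) with hδ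
    have hδ0 : ∀ n, 0 < δ n := fun n => hε0 _
    have hδlim : Filter.Tendsto δ Filter.atTop (nhds 0) := by
      apply squeeze_zero (fun n => le_of_lt (hδ0 n)) (fun n => ?_) hεlim
      rw [hδ, hε]
      apply div_le_div_of_nonneg_left one_pos.le (by positivity)
      push_cast; linarith
    have hyFP : ∀ n, (y n - drT PU PV (y n)) + δ n • y n = w := fun n => hx (n + N₀)
    have hy1 : ∀ n, 1 < ‖y n‖ := fun n => hN₀ (n + N₀) (Nat.le_add_left _ _)
    have hy0 : ∀ n, 0 < ‖y n‖ := fun n => lt_trans one_pos (hy1 n)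
    set v : ℕ → X := fun n => ‖y n‖⁻¹ • y n with hv
    have hvs : ∀ n, v n ∈ Metric.sphere (0:X) 1 := by
      intro n
      rw [mem_sphere_zero_iff_norm, hv, norm_smul, Real.norm_eq_abs,
        abs_of_pos (inv_pos.2 (hy0 n)), inv_mul_cancel₀ (ne_of_gt (hy0 n))]
    obtain ⟨d, hds, ψ, hψmono, hψconv⟩ := (isCompact_sphere (0:X) 1).tendsto_subseq hvs
    have hdnorm : ‖d‖ = 1 := mem_sphere_zero_iff_norm.1 hds
    have hinvlim : Filter.Tendsto (fun n => ‖y (ψ n)‖⁻¹) Filter.atTop (nhds 0) := by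
      have hnorm : Filter.Tendsto (fun n => ‖y (ψ n)‖) Filter.atTop Filter.atTop := by
        rw [Filter.tendsto_atTop]
        intro Rb
        obtain ⟨N, hN⟩ := hdiv Rb
        rw [Filter.eventually_atTop]
        refine ⟨N, fun n hn => ?_⟩
        exact le_of_lt (hN (ψ n + N₀) (le_trans (le_trans hn hψmono.le_apply) (Nat.le_add_right _ _)))
      exact hnorm.inv_tendsto_atTop
    -- the key monotonicity limit: ⟪w - F z, d⟫ ≥ 0 for every z
    have hstar : ∀ z : X, 0 ≤ ⟪w - (z - drT PU PV z), d⟫ := by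
      intro z
      have hterm : ∀ n, -(δ (ψ n) * ‖z‖)
          ≤ ⟪w - (z - drT PU PV z), v (ψ n) - ‖y (ψ n)‖⁻¹ • z⟫ := by
        intro n
        set m := ψ n
        have hmono := F_monotone hUconv hVconv hPU hPV (y m) z
        have hvec : w - (z - drT PU PV z)
            = ((y m - drT PU PV (y m)) - (z - drT PU PV z)) + δ m • y m := by
          rw [← hyFP m]; abel
        have hsplit : v m - ‖y m‖⁻¹ • z = ‖y m‖⁻¹ • (y m - z) := by
          rw [hv]; module
        rw [hvec, hsplit, real_inner_smul_right, inner_add_left, real_inner_smul_left]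
        have hinvnn : (0:ℝ) ≤ ‖y m‖⁻¹ := le_of_lt (inv_pos.2 (hy0 m))
        set s := ⟪(y m - drT PU PV (y m)) - (z - drT PU PV z), y m - z⟫ with hs
        set r := ⟪y m, y m - z⟫ with hr
        have hrge : ‖y m‖ * ‖y m‖ - ‖y m‖ * ‖z‖ ≤ r := by
          rw [hr, inner_sub_right]
          nlinarith [real_inner_le_norm (y m) z, real_inner_self_eq_norm_mul_norm (y m)]
        have h1 : δ m * (‖y m‖ * ‖y m‖ - ‖y m‖ * ‖z‖) ≤ δ m * r :=
          mul_le_mul_of_nonneg_left hrge (le_of_lt (hδ0 m))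
        have h2 : δ m * r ≤ s + δ m * r := by linarith [hmono]
        have h3 : ‖y m‖⁻¹ * (δ m * (‖y m‖ * ‖y m‖ - ‖y m‖ * ‖z‖))
            ≤ ‖y m‖⁻¹ * (s + δ m * r) :=
          mul_le_mul_of_nonneg_left (le_trans h1 h2) hinvnn
        have haux : ‖y m‖⁻¹ * (δ m * (‖y m‖ * ‖y m‖ - ‖y m‖ * ‖z‖))
            = δ m * ‖y m‖ - δ m * ‖z‖ := by
          have hyne : ‖y m‖ ≠ 0 := ne_of_gt (hy0 m)
          field_simp [hyne]
        nlinarith [mul_pos (hδ0 m) (hy0 m)]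
      have hlim1 : Filter.Tendsto
          (fun n => ⟪w - (z - drT PU PV z), v (ψ n) - ‖y (ψ n)‖⁻¹ • z⟫)
          Filter.atTop (nhds ⟪w - (z - drT PU PV z), d⟫) := by
        have hv2 : Filter.Tendsto (fun n => v (ψ n) - ‖y (ψ n)‖⁻¹ • z)
            Filter.atTop (nhds d) := by
          have h2 : Filter.Tendsto (fun n => ‖y (ψ n)‖⁻¹ • z) Filter.atTop (nhds ((0:ℝ) • z)) :=
            hinvlim.smul_const z
          rw [zero_smul] at h2
          simpa using hψconv.sub h2
        exact ((Continuous.inner continuous_const continuous_id).tendsto d).comp hv2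
      have hlim2 : Filter.Tendsto (fun n => -(δ (ψ n) * ‖z‖)) Filter.atTop (nhds 0) := by
        have hδψ : Filter.Tendsto (fun n => δ (ψ n)) Filter.atTop (nhds 0) :=
          hδlim.comp hψmono.tendsto_atTop
        have := (hδψ.mul_const ‖z‖).neg
        simpa using this
      exact le_of_tendsto_of_tendsto hlim2 hlim1 (Filter.Eventually.of_forall hterm)
    -- extend to closure of the range, then to D
    have hstar2 : ∀ c ∈ closure (Set.range fun x : X => x - drT PU PV x), 0 ≤ ⟪w - c, d⟫ := by
      intro c hc
      have hsub : closure (Set.range fun x : X => x - drT PU PV x)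
          ⊆ {u : X | 0 ≤ ⟪w - u, d⟫} := by
        apply closure_minimal
        · rintro u ⟨z, rfl⟩
          exact hstar z
        · apply isClosed_le continuous_const
          exact Continuous.inner (continuous_const.sub continuous_id) continuous_const
      exact hsub hc
    have hstar3 : ∀ z ∈ D, 0 ≤ ⟪w - z, d⟫ := fun z hz => hstar2 z (hDsub hz)
    -- via prolongation at w ∈ ri D, the inner products vanish
    have hzero : ∀ z ∈ D, ⟪w - z, d⟫ = 0 := by
      intro z hz
      obtain ⟨t, ht, hmem⟩ := ri_prolong hw (subset_affineSpan ℝ D hz)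
      have h1 := hstar3 _ hmem
      have h2 : w - (w + t • (w - z)) = (-t) • (w - z) := by module
      rw [h2, real_inner_smul_left] at h1
      have h3 := hstar3 z hz
      nlinarith
    -- d lies in the span of {w - z : z ∈ D}
    set Lsp : Submodule ℝ X := Submodule.span ℝ {u : X | ∃ z ∈ D, u = w - z} with hLsp
    have hyL : ∀ n, y n ∈ Lsp := by
      intro n
      have hFy : (y n - drT PU PV (y n)) ∈ D := F_mem_D hUconv hVconv hPU hPV (y n)
      have hyeq : y n = (δ n)⁻¹ • (w - (y n - drT PU PV (y n))) := by
        have h1 : δ n • y n = w - (y n - drT PU PV (y n)) := by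
          rw [← hyFP n]; abel
        rw [← h1, smul_smul, inv_mul_cancel₀ (ne_of_gt (hδ0 n)), one_smul]
      rw [hyeq]
      exact Submodule.smul_mem _ _ (Submodule.subset_span ⟨_, hFy, rfl⟩)
    have hdL : d ∈ Lsp := by
      have hclosed : IsClosed (Lsp : Set X) := Submodule.closed_of_finiteDimensional Lsp
      apply hclosed.mem_of_tendsto hψconv
      apply Filter.Eventually.of_forall
      intro n
      exact Submodule.smul_mem _ _ (hyL (ψ n))
    have hdperp : ∀ u ∈ Lsp, ⟪u, d⟫ = 0 := by
      intro u hu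
      induction hu using Submodule.span_induction with
      | mem u hu => obtain ⟨z, hz, rfl⟩ := hu; exact hzero z hz
      | zero => simp
      | add a b _ _ ha hb => rw [inner_add_left, ha, hb]; ring
      | smul t a _ ha => rw [real_inner_smul_left, ha]; ring
    have : ⟪d, d⟫ = (0:ℝ) := hdperp d hdL
    have hd0 : d = 0 := inner_self_eq_zero.1 this
    rw [hd0, norm_zero] at hdnorm
    norm_num at hdnorm

end Step2


/-- For nonempty closed convex `U, V` with metric projections `P_U, P_V`, and
`T = Id - P_U + P_V ∘ (2 P_U - Id)` the Douglas–Rachford operator of `(N_U, N_V)`: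
`ran (Id - T) ≃ (U - V) ∩ ((rec U)^⊖ + (rec V)^⊖)`. -/
theorem ran_id_sub_drT_normalCones_nearEq {X : Type*} [NormedAddCommGroup X]
    [InnerProductSpace ℝ X] [FiniteDimensional ℝ X] (U V : Set X)
    (hUne : U.Nonempty) (hVne : V.Nonempty)
    (hUcl : IsClosed U) (hVcl : IsClosed V)
    (hUconv : Convex ℝ U) (hVconv : Convex ℝ V)
    (PU PV : X → X)
    (hPU : IsMetricProjection PU U) (hPV : IsMetricProjection PV V) :
    NearEq (Set.range fun x => x - drT PU PV x)
      ((U - V) ∩ (polarCone (recCone U) + polarCone (recCone V))) := by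
  classical
  set C : Set X := Set.range fun x => x - drT PU PV x with hC
  set K : Set X := polarCone (recCone U) + polarCone (recCone V) with hK
  set D : Set X := (U - V) ∩ K with hD
  have hAconv : Convex ℝ (U - V) := hUconv.sub hVconv
  have hKconv : Convex ℝ K := (polarCone_convex _).add (polarCone_convex _)
  have hDconv : Convex ℝ D := hAconv.inter hKconv
  have hCD : C ⊆ D := by
    rintro c ⟨x, rfl⟩
    exact F_mem_D hUconv hVconv hPU hPV x
  obtain ⟨q₀, hq₀A, hq₀K⟩ := qual hUne hVne hUcl hVcl hUconv hVconv
  have hriD_sub : intrinsicInterior ℝ D ⊆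
      intrinsicInterior ℝ (U - V) ∩ intrinsicInterior ℝ K :=
    ri_inter_subset hAconv hKconv hq₀A hq₀K
  -- every point of ri D lies in the closure of the range
  have hri_toC : intrinsicInterior ℝ D ⊆ closure C := by
    intro w hw
    obtain ⟨hwA, hwK⟩ := hriD_sub hw
    obtain ⟨u₀, hu₀, v₀, hv₀, huv⟩ := intrinsicInterior_subset hwA
    have hKU_ne : (polarCone (recCone U)).Nonempty := ⟨0, polarCone_zero_mem _⟩
    have hKV_ne : (polarCone (recCone V)).Nonempty := ⟨0, polarCone_zero_mem _⟩
    obtain ⟨p, hp, q, hq, hpq⟩ := ri_add_subset (polarCone_convex _) (polarCone_convex _)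
      hKU_ne hKV_ne hwK
    obtain ⟨z₁, hz₁, hpmax⟩ := attain hUne hUcl hUconv hp
    obtain ⟨z₂, hz₂, hqmax⟩ := attain hVne hVcl hVconv hq
    have hpN : ∀ y ∈ U, (inner ℝ p (y - z₁) : ℝ) ≤ 0 := by
      intro y hy
      rw [inner_sub_right]
      linarith [hpmax y hy]
    have hqN : ∀ y ∈ V, (inner ℝ q (y - z₂) : ℝ) ≤ 0 := by
      intro y hy
      rw [inner_sub_right]
      linarith [hqmax y hy]
    exact step1 hUconv hVconv hPU hPV hu₀ hv₀ huv hz₁ hz₂ hpN hqN hpq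
  have hclCD : closure C = closure D := by
    apply le_antisymm (closure_mono hCD)
    have h1 : closure D = closure (intrinsicInterior ℝ D) := (closure_ri_eq hDconv).symm
    rw [h1]
    calc closure (intrinsicInterior ℝ D) ⊆ closure (closure C) := closure_mono hri_toC
      _ = closure C := closure_closure
  have hDsubC : D ⊆ closure C := fun z hz => hclCD ▸ subset_closure hz
  have hriD_C : intrinsicInterior ℝ D ⊆ C := fun w hw =>
    step2 hUconv hVconv hPU hPV hw hDsubC
  constructor
  · exact hclCD
  · -- relative interiors agree
    set E : Set X := convexHull ℝ C with hE
    have hCE : C ⊆ E := subset_convexHull ℝ C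
    have hED : E ⊆ D := convexHull_min hCD hDconv
    have hclED : closure E = closure D := by
      apply le_antisymm (closure_mono hED)
      rw [← hclCD]
      exact closure_mono hCE
    have hriED : intrinsicInterior ℝ E = intrinsicInterior ℝ D :=
      ri_eq_of_closure_eq (convex_convexHull ℝ C) hDconv hclED
    have hriEC : intrinsicInterior ℝ E ⊆ C := by
      rw [hriED]
      exact hriD_C
    have hspan : affineSpan ℝ E = affineSpan ℝ C := affineSpan_convexHull C
    have h1 : intrinsicInterior ℝ C ⊆ intrinsicInterior ℝ E :=
      ri_mono_span hCE (le_of_eq hspan)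
    have h2 : intrinsicInterior ℝ E ⊆ intrinsicInterior ℝ C := ri_sandwich hriEC hCE
    rw [le_antisymm h1 h2, hriED]
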